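/- Let k be a field and f : A → B a surjective homomorphism of finite-dimensional (associative, unital) k-algebras. Then the induced map on groups of units A^× → B^× is surjective; i.e., for every x ∈ A with f(x) invertible in B, there exists z ∈ ker(f) such that x + z is invertible in A. -/

import Mathlib

/-- In a finite-dimensional algebra over a field, one-sided inverses are two-sided. -/
lemma aux_mul_eq_one_comm {k A : Type*} [Field k] [Ring A] [Algebra k A]
    [FiniteDimensional k A] {u v : A} (h : u * v = 1) : v * u = 1 := by
  have h1 : (Algebra.lmul k A u) * (Algebra.lmul k A v) = 1 := by
    rw [← map_mul, h, map_one]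
  have h2 := mul_eq_one_comm.mp h1
  have h3 := congrArg (fun φ : Module.End k A => φ 1) h2
  simpa using h3

/-- An element with injective left multiplication is a unit. -/
lemma aux_isUnit_of_mulLeft_inj {k A : Type*} [Field k] [Ring A] [Algebra k A]
    [FiniteDimensional k A] {u : A}
    (h : Function.Injective (LinearMap.mulLeft k u)) : IsUnit u := by
  have hsurj : Function.Surjective (LinearMap.mulLeft k u) := LinearMap.injective_iff_surjective.mp h
  obtain ⟨v, hv⟩ := hsurj 1
  simp only [LinearMap.mulLeft_apply] at hv
  exact ⟨⟨u, v, hv, aux_mul_eq_one_comm (k := k) hv⟩, rfl⟩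

theorem stmt0 {k A B : Type*} [Field k] [Ring A] [Ring B] [Algebra k A] [Algebra k B]
    [FiniteDimensional k A] [FiniteDimensional k B]
    (f : A →ₐ[k] B) (hf : Function.Surjective f)
    (x : A) (hx : IsUnit (f x)) :
    ∃ z : A, f z = 0 ∧ IsUnit (x + z) := by
  classical
  set L : Module.End k A := LinearMap.mulLeft k x with hL
  -- get a Fitting index N which also stabilizes kernels and ranges
  obtain ⟨N, hN⟩ := Filter.eventually_atTop.mp <|
    (L.eventually_isCompl_ker_pow_range_pow).and
      ((L.eventually_iSup_ker_pow_eq).and (L.eventually_iInf_range_pow_eq))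
  obtain ⟨hcompl, hker, hrange⟩ := hN N le_rfl
  obtain ⟨-, hker', hrange'⟩ := hN (N + 1) (Nat.le_succ N)
  have hkerstab : LinearMap.ker (L ^ (N + 1)) = LinearMap.ker (L ^ N) := by
    rw [← hker, ← hker']
  have hrangestab : LinearMap.range (L ^ (N + 1)) = LinearMap.range (L ^ N) := by
    rw [← hrange, ← hrange']
  set K := LinearMap.ker (L ^ N) with hK
  set R := LinearMap.range (L ^ N) with hR
  have hpow : L ^ N = LinearMap.mulLeft k (x ^ N) := LinearMap.pow_mulLeft k A x N
  have hpow' : L ^ (N + 1) = LinearMap.mulLeft k (x ^ (N + 1)) :=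
    LinearMap.pow_mulLeft k A x (N + 1)
  -- membership characterizations
  have memK : ∀ c : A, c ∈ K ↔ x ^ N * c = 0 := by
    intro c
    rw [hK, LinearMap.mem_ker, hpow, LinearMap.mulLeft_apply]
  have memR : ∀ c : A, c ∈ R ↔ ∃ s, x ^ N * s = c := by
    intro c
    rw [hR, LinearMap.mem_range]
    simp [hpow]
  -- K is contained in the kernel of f
  have hKker : ∀ c ∈ K, f c = 0 := by
    intro c hc
    rw [memK] at hc
    have h0 : (f x) ^ N * f c = 0 := by rw [← map_pow, ← map_mul, hc, map_zero]
    have hxN : IsUnit ((f x) ^ N) := hx.pow N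
    obtain ⟨w, hw⟩ := hxN
    calc f c = (↑w⁻¹ * ↑w) * f c := by rw [Units.inv_mul, one_mul]
    _ = ↑w⁻¹ * (↑w * f c) := by rw [mul_assoc]
    _ = 0 := by rw [hw, h0, mul_zero]
  -- K and R are right ideals
  have hKright : ∀ c ∈ K, ∀ d : A, c * d ∈ K := by
    intro c hc d
    rw [memK] at hc ⊢
    rw [← mul_assoc, hc, zero_mul]
  have hRright : ∀ c ∈ R, ∀ d : A, c * d ∈ R := by
    intro c hc d
    rw [memR] at hc ⊢
    obtain ⟨s, hs⟩ := hc
    exact ⟨s * d, by rw [← mul_assoc, hs]⟩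
  -- x * R ⊆ R
  have hxR : ∀ c ∈ R, x * c ∈ R := by
    intro c hc
    rw [memR] at hc
    obtain ⟨s, hs⟩ := hc
    have hmem : (L ^ (N + 1)) s ∈ LinearMap.range (L ^ (N + 1)) := LinearMap.mem_range_self _ s
    rw [hrangestab] at hmem
    have heq : (L ^ (N + 1)) s = x * c := by
      rw [hpow', LinearMap.mulLeft_apply, pow_succ', mul_assoc, hs]
    rwa [heq] at hmem
  -- x is injective on R
  have hxinjR : ∀ c ∈ R, x * c = 0 → c = 0 := by
    intro c hc hxc
    rw [memR] at hc
    obtain ⟨s, hs⟩ := hc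
    have hmem : s ∈ LinearMap.ker (L ^ (N + 1)) := by
      rw [LinearMap.mem_ker, hpow', LinearMap.mulLeft_apply, pow_succ', mul_assoc, hs, hxc]
    rw [hkerstab] at hmem
    rw [hK, LinearMap.mem_ker, hpow, LinearMap.mulLeft_apply] at hmem
    rw [← hs, hmem]
  -- decompose 1 = e + b with e ∈ K, b ∈ R
  have h1mem : (1 : A) ∈ K ⊔ R := by rw [hcompl.codisjoint.eq_top]; trivial
  obtain ⟨e, he, b, hb, heb⟩ := Submodule.mem_sup.mp h1mem
  have hdisj : ∀ c : A, c ∈ K → c ∈ R → c = 0 := fun c h₁ h₂ =>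
    (Submodule.disjoint_def.mp hcompl.disjoint) c h₁ h₂
  -- decomposition of an arbitrary element c : c = e*c + b*c
  have hdecomp : ∀ c : A, e * c + b * c = c := by
    intro c
    rw [← add_mul, heb, one_mul]
  -- e annihilates R from the left
  have heR : ∀ r ∈ R, e * r = 0 := by
    intro r hr
    have h₁ : e * r ∈ K := hKright e he r
    have h₂ : e * r ∈ R := by
      have hh : e * r = r - b * r := by
        have := hdecomp r
        rw [eq_sub_iff_add_eq]
        exact this
      rw [hh]
      exact Submodule.sub_mem _ hr (hRright b hb r)
    exact hdisj _ h₁ h₂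
  -- e is idempotent
  have he2 : e * e = e := by
    have hbe : b * e = 0 := by
      have h₁ : b * e ∈ R := hRright b hb e
      have h₂ : b * e ∈ K := by
        have hh : b * e = e - e * e := by
          rw [eq_sub_iff_add_eq, add_comm]
          exact hdecomp e
        rw [hh]
        exact Submodule.sub_mem _ he (hKright e he e)
      exact hdisj _ h₂ h₁
    have := hdecomp e
    rwa [hbe, add_zero] at this
  -- the candidate
  refine ⟨e - x * e, ?_, ?_⟩
  · have hfe : f e = 0 := hKker e he
    rw [map_sub, map_mul, hfe, mul_zero, sub_zero]
  · set u := x + (e - x * e) with hu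
    -- u * e = e
    have hue : u * e = e := by
      have hexp : u * e = x * e + e * e - x * (e * e) := by
        rw [hu]; noncomm_ring
      rw [hexp, he2]
      noncomm_ring
    -- u * r = x * r for r ∈ R
    have hur : ∀ r ∈ R, u * r = x * r := by
      intro r hr
      have her : e * r = 0 := heR r hr
      have hexp : u * r = x * r + e * r - x * (e * r) := by
        rw [hu]; noncomm_ring
      rw [hexp, her, mul_zero, add_zero, sub_zero]
    -- left multiplication by u is injective
    have hinj : Function.Injective (LinearMap.mulLeft k u) := by
      have hker0 : ∀ c : A, u * c = 0 → c = 0 := by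
        intro c hc
        have hc1 : e * c ∈ K := hKright e he c
        have hc2 : b * c ∈ R := hRright b hb c
        have hsplit : u * (e * c) + u * (b * c) = 0 := by
          rw [← mul_add, hdecomp c, hc]
        have h₁ : u * (e * c) = e * c := by
          rw [← mul_assoc, hue]
        have h₂ : u * (b * c) = x * (b * c) := hur _ hc2
        rw [h₁, h₂] at hsplit
        have hxbc : x * (b * c) ∈ R := hxR _ hc2
        have hec0 : e * c = 0 := by
          have hmemR : e * c ∈ R := by
            have hh : e * c = -(x * (b * c)) := by
              rw [eq_neg_iff_add_eq_zero]; exact hsplit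
            rw [hh]
            exact Submodule.neg_mem _ hxbc
          exact hdisj _ hc1 hmemR
        have hxbc0 : x * (b * c) = 0 := by
          rw [hec0, zero_add] at hsplit
          exact hsplit
        have hbc0 : b * c = 0 := hxinjR _ hc2 hxbc0
        have := hdecomp c
        rw [hec0, hbc0, add_zero] at this
        exact this.symm
      intro c d hcd
      simp only [LinearMap.mulLeft_apply] at hcd
      have : u * (c - d) = 0 := by rw [mul_sub, hcd, sub_self]
      have := hker0 _ this
      exact sub_eq_zero.mp this
    exact aux_isUnit_of_mulLeft_inj hinj
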